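/- Let β̃_n satisfy √n β̃_n = O_p(1) (the true coefficient is zero), let ν > 0, and let λ_n ≥ 0 satisfy λ_n n^{(ν−1)/2} → ∞. Then (λ_n/√n)·|β̃_n|^{-ν} → ∞ in probability, i.e., for every M > 0, P((λ_n/√n)|β̃_n|^{-ν} > M) → 1. -/

import Mathlib

open MeasureTheory Filter

/-- If √n β̃_n = O_p(1) (the true coefficient is zero), ν > 0 and λ_n ≥ 0 satisfies
λ_n n^{(ν-1)/2} → ∞, then (λ_n/√n)·|β̃_n|^{-ν} → ∞ in probability: for every M > 0,
P((λ_n/√n)|β̃_n|^{-ν} > M) → 1.  (The event is stated in the equivalent form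
M·|β̃_n|^ν < λ_n/√n, which encodes the convention |0|^{-ν} = ∞.) -/
theorem stmt4 {Ω : Type*} [MeasurableSpace Ω] (μ : Measure Ω) [IsProbabilityMeasure μ]
    (β : ℕ → Ω → ℝ) (hmeas : ∀ n, Measurable (β n)) (ν : ℝ) (hν : 0 < ν)
    (lam : ℕ → ℝ) (hlam : ∀ n, 0 ≤ lam n)
    (hdiv : Tendsto (fun n : ℕ => lam n * (n : ℝ) ^ ((ν - 1) / 2)) atTop atTop)
    (htight : ∀ ε : ℝ, 0 < ε → ∃ M : ℝ, ∀ n : ℕ,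
      μ {ω | M < Real.sqrt n * |β n ω|} < ENNReal.ofReal ε) :
    ∀ M : ℝ, 0 < M →
      Tendsto (fun n : ℕ => μ {ω | M * |β n ω| ^ ν < lam n / Real.sqrt n})
        atTop (nhds 1) := by
  intro M hM
  set A : ℕ → Set Ω := fun n => {ω | M * |β n ω| ^ ν < lam n / Real.sqrt n} with hA
  have hmeasA : ∀ n, MeasurableSet (A n) := by
    intro n
    exact measurableSet_lt (((hmeas n).abs.pow_const ν).const_mul M) measurable_const
  have h0 : Tendsto (fun n => μ (A n)ᶜ) atTop (nhds 0) := by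
    rw [ENNReal.tendsto_nhds_zero]
    intro ε hε
    set e : ENNReal := min ε 1 with he
    have hene : e ≠ ⊤ := ne_top_of_le_ne_top (by simp) (min_le_right _ _)
    have hepos : 0 < e.toReal :=
      ENNReal.toReal_pos (lt_min hε zero_lt_one).ne' hene
    obtain ⟨K, hK⟩ := htight e.toReal hepos
    set K' : ℝ := max K 0 with hK'
    have hK'0 : 0 ≤ K' := le_max_right _ _
    filter_upwards [hdiv.eventually_gt_atTop (M * K' ^ ν), eventually_ge_atTop 1] with n hn hn1
    have hsub : (A n)ᶜ ⊆ {ω | K < Real.sqrt n * |β n ω|} := by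
      intro ω hω
      by_contra hc
      apply hω
      simp only [Set.mem_setOf_eq, not_lt] at hc
      have hc' : Real.sqrt n * |β n ω| ≤ K' := hc.trans (le_max_left _ _)
      have hnpos : (0:ℝ) < n := by exact_mod_cast hn1
      set t : ℝ := Real.sqrt n with ht
      have htpos : 0 < t := Real.sqrt_pos.mpr hnpos
      have htν : 0 < t ^ ν := Real.rpow_pos_of_pos htpos ν
      have hb : |β n ω| ≤ K' / t := by
        rw [le_div_iff₀ htpos]
        linarith [hc']
      have hb2 : |β n ω| ^ ν ≤ K' ^ ν / t ^ ν := by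
        calc |β n ω| ^ ν ≤ (K' / t) ^ ν := Real.rpow_le_rpow (abs_nonneg _) hb hν.le
          _ = K' ^ ν / t ^ ν := Real.div_rpow hK'0 htpos.le ν
      have hteq : (n : ℝ) ^ ((ν - 1) / 2) = t ^ (ν - 1) := by
        rw [ht, Real.sqrt_eq_rpow, ← Real.rpow_mul hnpos.le]
        congr 1
        ring
      have h3 : M * K' ^ ν < lam n * (t ^ ν / t) := by
        rw [hteq, Real.rpow_sub htpos, Real.rpow_one] at hn
        exact hn
      have h4 : M * K' ^ ν * t < lam n * t ^ ν := by
        have h5 := mul_lt_mul_of_pos_right h3 htpos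
        calc M * K' ^ ν * t < lam n * (t ^ ν / t) * t := h5
          _ = lam n * t ^ ν := by field_simp
      show M * |β n ω| ^ ν < lam n / t
      rw [lt_div_iff₀ htpos]
      calc M * |β n ω| ^ ν * t ≤ M * (K' ^ ν / t ^ ν) * t := by gcongr
        _ = (M * K' ^ ν * t) / t ^ ν := by ring
        _ < lam n := by
            rw [div_lt_iff₀ htν]
            exact h4
    calc μ (A n)ᶜ ≤ μ {ω | K < Real.sqrt n * |β n ω|} := measure_mono hsub
      _ ≤ e := le_of_lt (by simpa [ENNReal.ofReal_toReal hene] using hK n)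
      _ ≤ ε := min_le_left _ _
  have hAe : ∀ n, μ (A n) = 1 - μ (A n)ᶜ := by
    intro n
    rw [measure_compl (hmeasA n) (measure_ne_top μ _), measure_univ,
      ENNReal.sub_sub_cancel (by simp) prob_le_one]
  show Tendsto (fun n => μ (A n)) atTop (nhds 1)
  simp only [hAe]
  have := ENNReal.Tendsto.sub (tendsto_const_nhds (x := (1 : ENNReal)) (f := atTop))
    h0 (Or.inl (by simp))
  simpa using this
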